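/- arXiv:math/0312514 — 2 statements merged into one kernel-verified Lean document; each statement's English description precedes it below -/
import Mathlib

section
/- For every integer r, define P_r : ℤ → ℚ by P_r(t) = 3·B_5(t) − (r−3)·B_4(t) + (r^2+7r+10)·B_3(t) + ((7r^3+30r^2+29r−54)/12)·B_2(t) + ((r^4−24r^3−197r^2−560r−548)/48)·B_1(t) − (19r^5+235r^4+1305r^3+3765r^2+5616r+3140)/480, where B_k(t) = (t+1)(t+2)···(t+k)/k!. Then for every integer r there exists an integer t such that P_r(t) is not an integer. -/
/-- The binomial-basis polynomial `B_k(t) = (t+1)(t+2)⋯(t+k)/k!` evaluated at an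
integer `t`, as a rational number. -/
def binomBasis (k : ℕ) (t : ℤ) : ℚ :=
  (∏ i ∈ Finset.range k, ((t : ℚ) + i + 1)) / (Nat.factorial k)

/-- The candidate Hilbert polynomial of the dual of a rank 3 bundle on ℙ⁵ whose
section would vanish on a double structure with twist `r` on a plane, expanded
in the binomial basis. -/
def candidateHilbertPoly (r t : ℤ) : ℚ :=
  3 * binomBasis 5 t - ((r : ℚ) - 3) * binomBasis 4 t +
    ((r : ℚ) ^ 2 + 7 * r + 10) * binomBasis 3 t +
    ((7 * (r : ℚ) ^ 3 + 30 * r ^ 2 + 29 * r - 54) / 12) * binomBasis 2 t +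
    (((r : ℚ) ^ 4 - 24 * r ^ 3 - 197 * r ^ 2 - 560 * r - 548) / 48) * binomBasis 1 t -
    (19 * (r : ℚ) ^ 5 + 235 * r ^ 4 + 1305 * r ^ 3 + 3765 * r ^ 2 + 5616 * r + 3140) / 480

lemma eval_neg_one (r : ℤ) :
    candidateHilbertPoly r (-1) =
      -((19 * (r : ℚ) ^ 5 + 235 * r ^ 4 + 1305 * r ^ 3 + 3765 * r ^ 2 + 5616 * r + 3140) / 480) := by
  simp [candidateHilbertPoly, binomBasis, Finset.prod_range_succ]

lemma zmod3_ne : ∀ x : ZMod 3,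
    19 * x ^ 5 + 235 * x ^ 4 + 1305 * x ^ 3 + 3765 * x ^ 2 + 5616 * x + 3140 ≠ 0 := by
  decide

/-- For every twist `r` there is an integer `t` at which the candidate Hilbert
polynomial is not an integer (failure of the Schwarzenberger conditions). -/
theorem candidateHilbertPoly_not_integer_valued :
    ∀ r : ℤ, ∃ t : ℤ, ∀ n : ℤ, candidateHilbertPoly r t ≠ (n : ℚ) := by
  intro r
  refine ⟨-1, fun n h => ?_⟩
  rw [eval_neg_one] at h
  have h3 : 19 * r ^ 5 + 235 * r ^ 4 + 1305 * r ^ 3 + 3765 * r ^ 2 + 5616 * r + 3140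
      = -480 * n := by
    have h2 : ((19 * r ^ 5 + 235 * r ^ 4 + 1305 * r ^ 3 + 3765 * r ^ 2 + 5616 * r + 3140 : ℤ) : ℚ)
        = ((-480 * n : ℤ) : ℚ) := by push_cast; linarith [h]
    exact_mod_cast h2
  have h4 : ((19 * r ^ 5 + 235 * r ^ 4 + 1305 * r ^ 3 + 3765 * r ^ 2 + 5616 * r + 3140 : ℤ) : ZMod 3) = 0 := by
    rw [h3]
    exact (ZMod.intCast_zmod_eq_zero_iff_dvd _ 3).mpr ⟨-160 * n, by ring⟩
  push_cast at h4
  exact zmod3_ne (r : ZMod 3) h4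
end

section
/- Let R be a unique factorization domain in which 2 is a unit, and let a, b ∈ R be nonzero elements that are relatively prime (every common divisor of a and b is a unit). Define α : R → R^3 by α(x) = (a^2 x, 2ab x, b^2 x) and β : R^3 → R^2 by β(u, v, w) = (2b u − a v, −b v + 2a w). Then α is injective, β ∘ α = 0, and the kernel of β equals the image of α. -/
/-- Exactness of the sequence `0 → R → R³ → R²` given by the column
`(a², 2ab, b²)` and the matrix `((2b, −a, 0), (0, −b, 2a))`, for `a, b`
nonzero relatively prime elements of a UFD in which `2` is a unit. -/
theorem exact_sequence_double_conic {R : Type*} [CommRing R] [IsDomain R]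
    [UniqueFactorizationMonoid R] (h2 : IsUnit (2 : R))
    (a b : R) (ha : a ≠ 0) (hb : b ≠ 0) (hab : IsRelPrime a b)
    (α : R → R × R × R) (β : R × R × R → R × R)
    (hα : ∀ x, α x = (a ^ 2 * x, 2 * a * b * x, b ^ 2 * x))
    (hβ : ∀ u v w : R, β (u, v, w) = (2 * b * u - a * v, -(b * v) + 2 * a * w)) :
    Function.Injective α ∧ (∀ x, β (α x) = 0) ∧
      (∀ v, β v = 0 ↔ v ∈ Set.range α) := by
  refine ⟨?_, ?_, ?_⟩
  · intro x y hxy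
    rw [hα, hα] at hxy
    have : a ^ 2 * x = a ^ 2 * y := congrArg Prod.fst hxy
    exact mul_left_cancel₀ (pow_ne_zero 2 ha) this
  · intro x
    rw [hα, hβ, Prod.mk_eq_zero]
    constructor <;> ring
  · rintro ⟨u, v, w⟩
    constructor
    · intro hv
      rw [hβ, Prod.mk_eq_zero] at hv
      obtain ⟨hv1, hv2⟩ := hv
      have h1 : 2 * b * u = a * v := by linear_combination hv1
      have h2' : b * v = 2 * a * w := by linear_combination -hv2
      obtain ⟨c, hc⟩ := isUnit_iff_exists_inv.mp h2
      -- a ∣ u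
      have hdvd : a ∣ 2 * (b * u) := ⟨v, by linear_combination h1⟩
      have hdvd2 : a ∣ b * u := by
        obtain ⟨t, ht⟩ := hdvd
        exact ⟨c * t, by linear_combination c * ht - (b * u) * hc⟩
      have hau : a ∣ u := hab.dvd_of_dvd_mul_left hdvd2
      obtain ⟨x, rfl⟩ := hau
      have hvx : v = 2 * b * x := by
        have : a * (2 * b * x) = a * v := by linear_combination h1
        exact (mul_left_cancel₀ ha this).symm
      subst hvx
      have hbw : a * w = b ^ 2 * x := by
        have h2ne : (2 : R) ≠ 0 := h2.ne_zero
        have : 2 * (a * w) = 2 * (b ^ 2 * x) := by linear_combination -h2'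
        exact mul_left_cancel₀ h2ne this
      have hax : a ∣ b ^ 2 * x := ⟨w, by linear_combination -hbw⟩
      have haxx : a ∣ x := (hab.pow_right (n := 2)).dvd_of_dvd_mul_left hax
      obtain ⟨y, rfl⟩ := haxx
      refine ⟨y, ?_⟩
      rw [hα]
      have hw : w = b ^ 2 * y := by
        have : a * w = a * (b ^ 2 * y) := by linear_combination hbw
        exact mul_left_cancel₀ ha this
      subst hw
      refine Prod.ext (by ring) (Prod.ext (by ring) (by ring))
    · rintro ⟨x, hx⟩
      rw [hα] at hx
      rw [← hx, hβ, Prod.mk_eq_zero]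
      constructor <;> ring
end
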